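/- Suppose κ satisfies condition (i) of Assumption 1. Then for every j ∈ {k, …, N}, the function (x, x̂_{j:N}) ↦ G_j(x, x̂_{j:N}) is continuous on S × S^(N−j+1), where the product spaces carry the product metric; in particular G is continuous on S^(N−k+1). -/

import Mathlib

open MeasureTheory Filter
open scoped ENNReal NNReal Topology

noncomputable section

/-- The state space `S = ℝ² × [0, 2π)`. -/
abbrev S : Type := {x : ℝ × ℝ × ℝ // x.2.2 ∈ Set.Ico (0 : ℝ) (2 * Real.pi)}

/-- The metric `d` on `S`. -/
noncomputable def dS (x y : S) : ℝ :=
  Real.sqrt ((x.1.1 - y.1.1) ^ 2 + (x.1.2.1 - y.1.2.1) ^ 2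
    + 2 * (Real.cos x.1.2.2 - Real.cos y.1.2.2) ^ 2
    + 2 * (Real.sin x.1.2.2 - Real.sin y.1.2.2) ^ 2)

/-- The initial state `x₀ = (0,0,0)`. -/
def origin : S := ⟨(0, 0, 0), ⟨le_rfl, by positivity⟩⟩

/-- `κ` is a Markov kernel on `S`. -/
def IsMarkov (κ : S → Measure S) : Prop :=
  (∀ x, IsProbabilityMeasure (κ x)) ∧
    ∀ A : Set S, MeasurableSet A → Measurable fun x => κ x A

/-- Continuity of a real-valued function with respect to the metric `dS`. -/
def DContinuous (g : S → ℝ) : Prop :=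
  ∀ x : S, ∀ ε : ℝ, 0 < ε → ∃ δ : ℝ, 0 < δ ∧ ∀ y : S, dS x y < δ → |g y - g x| < ε

/-- Openness with respect to the metric `dS`. -/
def DOpen (O : Set S) : Prop :=
  ∀ x ∈ O, ∃ δ : ℝ, 0 < δ ∧ ∀ y : S, dS x y < δ → y ∈ O

/-- Assumption 1 on the kernel `κ`. -/
def Assumption1 (κ : S → Measure S) : Prop :=
  (∀ A : Set S, MeasurableSet A → DContinuous fun x => (κ x A).toReal) ∧
    ∀ O : Set S, DOpen O → O.Nonempty → ∀ x : S, 0 < κ x O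

/-- Auxiliary downward value recursion; the first argument is the number
`N + 1 - j` of remaining stages. -/
noncomputable def Jaux (κ : S → Measure S) (c' : ℕ → ℝ) (xhat : ℕ → S) :
    ℕ → ℕ → S → ℝ≥0∞
  | 0, _, _ => 0
  | m + 1, j, x =>
      min (ENNReal.ofReal (dS x (xhat j) ^ 2) + ∫⁻ y, Jaux κ c' xhat m (j + 1) y ∂(κ x))
        (ENNReal.ofReal (c' j))

/-- The optimal cost-to-go `J*_j(x, x̂_{j:N})`. -/
noncomputable def JJ (κ : S → Measure S) (c' : ℕ → ℝ) (N : ℕ) (xhat : ℕ → S)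
    (j : ℕ) (x : S) : ℝ≥0∞ :=
  Jaux κ c' xhat (N + 1 - j) j x

/-- `G_j(x, x̂_{j:N}) = ∫ J*_j(y, x̂_{j:N}) κ(x)(dy)`. -/
noncomputable def Gj (κ : S → Measure S) (c' : ℕ → ℝ) (N : ℕ) (xhat : ℕ → S)
    (j : ℕ) (x : S) : ℝ≥0∞ :=
  ∫⁻ y, JJ κ c' N xhat j y ∂(κ x)

/-- `G(x̂_{k:N}) = G_k(x₀, x̂_{k:N})`. -/
noncomputable def Gtot (κ : S → Measure S) (c' : ℕ → ℝ) (k N : ℕ) (xhat : ℕ → S) : ℝ≥0∞ :=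
  Gj κ c' N xhat k origin

/-- A randomized policy: a tuple of Borel measurable functions `f_j : S → [0,1]`. -/
def IsPolicy (k N : ℕ) (f : ℕ → S → ℝ≥0∞) : Prop :=
  ∀ j, k ≤ j → j ≤ N → Measurable (f j) ∧ ∀ x, f j x ≤ 1

/-- Auxiliary cost-to-go recursion for a policy; first argument is `N + 1 - j`. -/
noncomputable def Vaux (κ : S → Measure S) (c' : ℕ → ℝ) (xhat : ℕ → S)
    (f : ℕ → S → ℝ≥0∞) : ℕ → ℕ → S → ℝ≥0∞
  | 0, _, _ => 0
  | m + 1, j, x =>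
      f j x * (ENNReal.ofReal (dS x (xhat j) ^ 2) + ∫⁻ y, Vaux κ c' xhat f m (j + 1) y ∂(κ x))
        + (1 - f j x) * ENNReal.ofReal (c' j)

/-- The cost-to-go `V_j` of a policy `f` with estimates `x̂`. -/
noncomputable def VV (κ : S → Measure S) (c' : ℕ → ℝ) (N : ℕ) (xhat : ℕ → S)
    (f : ℕ → S → ℝ≥0∞) (j : ℕ) (x : S) : ℝ≥0∞ :=
  Vaux κ c' xhat f (N + 1 - j) j x

/-- The total expected cost `C(f_{k:N}, x̂_{k:N})`. -/
noncomputable def Cost (κ : S → Measure S) (c' : ℕ → ℝ) (k N : ℕ) (xhat : ℕ → S)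
    (f : ℕ → S → ℝ≥0∞) : ℝ≥0∞ :=
  ∫⁻ y, VV κ c' N xhat f k y ∂(κ origin)

/-- `f ∈ 𝔓(x̂_{k:N})`: `f` minimizes the cost over all randomized policies. -/
def inP (κ : S → Measure S) (c' : ℕ → ℝ) (k N : ℕ) (xhat : ℕ → S)
    (f : ℕ → S → ℝ≥0∞) : Prop :=
  IsPolicy k N f ∧
    ∀ g : ℕ → S → ℝ≥0∞, IsPolicy k N g → Cost κ c' k N xhat f ≤ Cost κ c' k N xhat g

/-- `x̂ ∈ 𝔛(f_{k:N})`: the estimates minimize the cost for the policy `f`. -/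
def inX (κ : S → Measure S) (c' : ℕ → ℝ) (k N : ℕ) (f : ℕ → S → ℝ≥0∞)
    (xhat : ℕ → S) : Prop :=
  ∀ yhat : ℕ → S, Cost κ c' k N xhat f ≤ Cost κ c' k N yhat f

/-- Conditioning a measure on "no transmission" at stage `j`. -/
noncomputable def condMeas (f : ℕ → S → ℝ≥0∞) (j : ℕ) (μ : Measure S) : Measure S :=
  (∫⁻ x, f j x ∂μ)⁻¹ • μ.withDensity (f j)

/-- The predicted measures `μ_{j|j−1}`, by recursion on `j - k`. -/
noncomputable def mupredAux (κ : S → Measure S) (f : ℕ → S → ℝ≥0∞) (k : ℕ) :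
    ℕ → Measure S
  | 0 => κ origin
  | n + 1 => (condMeas f (k + n) (mupredAux κ f k n)).bind κ

/-- `μ_{j|j−1}`. -/
noncomputable def mupred (κ : S → Measure S) (f : ℕ → S → ℝ≥0∞) (k j : ℕ) : Measure S :=
  mupredAux κ f k (j - k)

/-- `q_j = ∫ f_j dμ_{j|j−1}`. -/
noncomputable def qq (κ : S → Measure S) (f : ℕ → S → ℝ≥0∞) (k j : ℕ) : ℝ≥0∞ :=
  ∫⁻ x, f j x ∂(mupred κ f k j)

/-- `μ_{j|j}`. -/
noncomputable def mucond (κ : S → Measure S) (f : ℕ → S → ℝ≥0∞) (k j : ℕ) : Measure S :=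
  condMeas f j (mupred κ f k j)

/-- Non-degeneracy of a policy. -/
def NonDeg (κ : S → Measure S) (f : ℕ → S → ℝ≥0∞) (k N : ℕ) : Prop :=
  ∀ j, k ≤ j → j ≤ N → 0 < qq κ f k j

/-- The closed "no transmission" region `D̄_j`. -/
noncomputable def Dbar (κ : S → Measure S) (c' : ℕ → ℝ) (N : ℕ) (xhat : ℕ → S)
    (j : ℕ) : Set S :=
  {x : S | ENNReal.ofReal (dS x (xhat j) ^ 2) + ∫⁻ y, JJ κ c' N xhat (j + 1) y ∂(κ x)
      ≤ ENNReal.ofReal (c' j)}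

/-- The open "no transmission" region `Ḏ_j`. -/
noncomputable def Dund (κ : S → Measure S) (c' : ℕ → ℝ) (N : ℕ) (xhat : ℕ → S)
    (j : ℕ) : Set S :=
  {x : S | ENNReal.ofReal (dS x (xhat j) ^ 2) + ∫⁻ y, JJ κ c' N xhat (j + 1) y ∂(κ x)
      < ENNReal.ofReal (c' j)}

/-- Hypothesis (H). -/
def HypH (κ : S → Measure S) (c' : ℕ → ℝ) (k N : ℕ) : Prop :=
  ∀ j, k ≤ j → j ≤ N → ∃ xhat : ℕ → S, (Dund κ c' N xhat j).Nonempty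

/-- Weak convergence of measures on `(S, dS)`: tested against `dS`-continuous
bounded functions. -/
def WeakConvS (μl : ℕ → Measure S) (μ : Measure S) : Prop :=
  ∀ h : S → ℝ, DContinuous h → (∃ C : ℝ, ∀ x, |h x| ≤ C) →
    Tendsto (fun l => ∫ x, h x ∂(μl l)) atTop (𝓝 (∫ x, h x ∂μ))

/-- Convergence of a sequence of (non-degenerate) policies to a policy. -/
def PolConv (κ : S → Measure S) (k N : ℕ) (g : ℕ → ℕ → S → ℝ≥0∞)
    (f : ℕ → S → ℝ≥0∞) : Prop :=
  ∀ j, k ≤ j → j ≤ N →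
    WeakConvS (fun l => mucond κ (g l) k j) (mucond κ f k j) ∧
      Tendsto (fun l => qq κ (g l) k j) atTop (𝓝 (qq κ f k j))

noncomputable def phiS (x : S) : EuclideanSpace ℝ (Fin 4) :=
  WithLp.toLp 2 ![x.1.1, x.1.2.1, Real.sqrt 2 * Real.cos x.1.2.2, Real.sqrt 2 * Real.sin x.1.2.2]

lemma dS_eq_dist (x y : S) : dS x y = dist (phiS x) (phiS y) := by
  rw [EuclideanSpace.dist_eq]
  unfold dS phiS
  rw [Fin.sum_univ_four]
  simp only [PiLp.toLp_apply, Matrix.cons_val_zero, Matrix.cons_val_one, Matrix.head_cons,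
    Matrix.cons_val_two, Matrix.tail_cons, Matrix.cons_val_three, Real.dist_eq, sq_abs]
  congr 1
  have h2 : Real.sqrt 2 ^ 2 = 2 := Real.sq_sqrt (by norm_num)
  ring_nf
  rw [h2]
  ring

lemma dS_nonneg (x y : S) : 0 ≤ dS x y := Real.sqrt_nonneg _

lemma dS_self (x : S) : dS x x = 0 := by rw [dS_eq_dist, dist_self]

lemma dS_comm (x y : S) : dS x y = dS y x := by rw [dS_eq_dist, dS_eq_dist, dist_comm]

lemma dS_triangle (x y z : S) : dS x z ≤ dS x y + dS y z := by
  rw [dS_eq_dist, dS_eq_dist, dS_eq_dist]; exact dist_triangle _ _ _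

lemma continuous_dS_left (a : S) : Continuous fun x : S => dS x a := by
  unfold dS; fun_prop

instance : OpensMeasurableSpace S :=
  Subtype.opensMeasurableSpace {x : ℝ × ℝ × ℝ | x.2.2 ∈ Set.Ico (0 : ℝ) (2 * Real.pi)}

open ProbabilityTheory in
lemma meas_lint {κ : S → Measure S}
    (hm : ∀ A : Set S, MeasurableSet A → Measurable fun x => κ x A)
    (hp : ∀ x, IsProbabilityMeasure (κ x))
    {h : S → ℝ≥0∞} (hh : Measurable h) :
    Measurable fun x => ∫⁻ y, h y ∂κ x := by
  let η : Kernel S S := ⟨κ, Measure.measurable_of_measurable_coe κ hm⟩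
  haveI : IsMarkovKernel η := ⟨hp⟩
  exact hh.lintegral_kernel (κ := η)

lemma Jaux_bound (κ : S → Measure S) (c' : ℕ → ℝ) (xhat : ℕ → S) (m j : ℕ) (x : S) :
    Jaux κ c' xhat m j x ≤ ENNReal.ofReal (|c' j| + 1) := by
  cases m with
  | zero => exact zero_le
  | succ m =>
    refine (min_le_right _ _).trans (ENNReal.ofReal_le_ofReal ?_)
    have := abs_nonneg (c' j)
    have := le_abs_self (c' j)
    linarith

lemma Jaux_measurable {κ : S → Measure S}
    (hm : ∀ A : Set S, MeasurableSet A → Measurable fun x => κ x A)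
    (hp : ∀ x, IsProbabilityMeasure (κ x)) (c' : ℕ → ℝ) (xhat : ℕ → S) :
    ∀ m j, Measurable (Jaux κ c' xhat m j) := by
  intro m
  induction m with
  | zero => intro j; simpa [Jaux] using measurable_const
  | succ m IH =>
    intro j
    have h1 : Measurable fun x : S => ENNReal.ofReal (dS x (xhat j) ^ 2) :=
      ENNReal.measurable_ofReal.comp ((continuous_dS_left (xhat j)).pow 2).measurable
    exact (h1.add (meas_lint hm hp (IH (j + 1)))).min measurable_const

lemma lint_cont {κ : S → Measure S}
    (hp : ∀ x, IsProbabilityMeasure (κ x))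
    (hcont : ∀ A : Set S, MeasurableSet A → DContinuous fun x => (κ x A).toReal)
    {h : S → ℝ≥0∞} (hh : Measurable h) {C : ℝ} (hC : 0 < C)
    (hb : ∀ y, h y ≤ ENNReal.ofReal C) (x : S) {ε : ℝ} (hε : 0 < ε) :
    ∃ δ : ℝ, 0 < δ ∧ ∀ y : S, dS x y < δ →
      (∫⁻ z, h z ∂κ y ≤ ∫⁻ z, h z ∂κ x + ENNReal.ofReal ε ∧
       ∫⁻ z, h z ∂κ x ≤ ∫⁻ z, h z ∂κ y + ENNReal.ofReal ε) := by
  classical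
  -- discretization parameters
  set n : ℕ := max 1 ⌈2 * C / ε⌉₊ with hn
  have hn1 : 1 ≤ n := le_max_left _ _
  have hn0 : (0 : ℝ) < n := by exact_mod_cast hn1
  set t : ℝ := C / n with htdef
  have ht : 0 < t := div_pos hC hn0
  have hCnt : C = n * t := by rw [htdef]; field_simp
  have htε : t ≤ ε / 2 := by
    have h1 : (2 * C / ε : ℝ) ≤ n := (Nat.le_ceil _).trans (by exact_mod_cast le_max_right _ _)
    rw [htdef, div_le_iff₀ hn0]
    rw [div_le_iff₀ hε] at h1
    nlinarith
  set A : ℕ → Set S := fun i => h ⁻¹' Set.Ici (ENNReal.ofReal (i * t)) with hAdef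
  have hA : ∀ i, MeasurableSet (A i) := fun i => hh measurableSet_Ici
  -- pointwise sandwich
  have pw : ∀ y : S,
      (∑ i ∈ Finset.Icc 1 n, (A i).indicator (fun _ => ENNReal.ofReal t) y) ≤ h y ∧
      h y ≤ (∑ i ∈ Finset.Icc 1 n, (A i).indicator (fun _ => ENNReal.ofReal t) y)
        + ENNReal.ofReal t := by
    intro y
    have hfin : h y ≠ ⊤ := ((hb y).trans_lt ENNReal.ofReal_lt_top).ne
    set r : ℝ := (h y).toReal with hrdef
    have hy : h y = ENNReal.ofReal r := (ENNReal.ofReal_toReal hfin).symm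
    have hr0 : 0 ≤ r := ENNReal.toReal_nonneg
    have hrC : r ≤ C := ENNReal.toReal_le_of_le_ofReal hC.le (hb y)
    set m : ℕ := min n ⌊r / t⌋₊ with hmdef
    have hmn : m ≤ n := min_le_left _ _
    have hsum : (∑ i ∈ Finset.Icc 1 n, (A i).indicator (fun _ => ENNReal.ofReal t) y)
        = (m : ℝ≥0∞) * ENNReal.ofReal t := by
      have hcongr : ∀ i ∈ Finset.Icc 1 n,
          (A i).indicator (fun _ => ENNReal.ofReal t) y
            = if i ≤ m then ENNReal.ofReal t else 0 := by
        intro i hi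
        rw [Set.indicator_apply]
        congr 1
        simp only [hAdef, Set.mem_preimage, Set.mem_Ici, hy,
          ENNReal.ofReal_le_ofReal_iff hr0, eq_iff_iff]
        rw [← le_div_iff₀ ht, ← Nat.le_floor_iff (div_nonneg hr0 ht.le)]
        rw [Finset.mem_Icc] at hi
        omega
      rw [Finset.sum_congr rfl hcongr, ← Finset.sum_filter]
      have hfil : (Finset.Icc 1 n).filter (· ≤ m) = Finset.Icc 1 m := by
        ext i
        simp only [Finset.mem_filter, Finset.mem_Icc]
        omega
      rw [hfil, Finset.sum_const, Nat.card_Icc]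
      simp [nsmul_eq_mul]
    rw [hsum, hy]
    have hmle : (m : ℝ) * t ≤ r := by
      have h1 : (m : ℝ) ≤ r / t := by
        have := Nat.floor_le (div_nonneg hr0 ht.le)
        have h2 : (m : ℝ) ≤ (⌊r / t⌋₊ : ℝ) := by exact_mod_cast min_le_right n ⌊r / t⌋₊
        linarith
      rw [← le_div_iff₀ ht]; exact h1
    constructor
    · calc (m : ℝ≥0∞) * ENNReal.ofReal t = ENNReal.ofReal ((m : ℝ) * t) := by
            rw [ENNReal.ofReal_mul (Nat.cast_nonneg m), ENNReal.ofReal_natCast]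
        _ ≤ ENNReal.ofReal r := ENNReal.ofReal_le_ofReal hmle
    · have hrmt : r ≤ (m : ℝ) * t + t := by
        rcases le_or_gt ⌊r / t⌋₊ n with hle | hlt
        · have hm : m = ⌊r / t⌋₊ := min_eq_right hle
          have := Nat.lt_floor_add_one (r / t)
          rw [div_lt_iff₀ ht] at this
          rw [hm]
          push_cast at this ⊢
          nlinarith
        · have hm : m = n := min_eq_left hlt.le
          rw [hm, ← hCnt]
          linarith
      calc ENNReal.ofReal r ≤ ENNReal.ofReal ((m : ℝ) * t + t) := ENNReal.ofReal_le_ofReal hrmt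
        _ ≤ ENNReal.ofReal ((m : ℝ) * t) + ENNReal.ofReal t := ENNReal.ofReal_add_le
        _ = (m : ℝ≥0∞) * ENNReal.ofReal t + ENNReal.ofReal t := by
            rw [ENNReal.ofReal_mul (Nat.cast_nonneg m), ENNReal.ofReal_natCast]
  -- integral sandwich
  have hint : ∀ μ : Measure S,
      (∫⁻ y, (∑ i ∈ Finset.Icc 1 n, (A i).indicator (fun _ => ENNReal.ofReal t) y) ∂μ)
        = ∑ i ∈ Finset.Icc 1 n, ENNReal.ofReal t * μ (A i) := by
    intro μ
    rw [lintegral_finset_sum _ (fun i _ => measurable_const.indicator (hA i))]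
    exact Finset.sum_congr rfl fun i _ => lintegral_indicator_const (hA i) _
  have hsand : ∀ μ : Measure S, IsProbabilityMeasure μ →
      (∑ i ∈ Finset.Icc 1 n, ENNReal.ofReal t * μ (A i)) ≤ ∫⁻ z, h z ∂μ ∧
      ∫⁻ z, h z ∂μ ≤ (∑ i ∈ Finset.Icc 1 n, ENNReal.ofReal t * μ (A i)) + ENNReal.ofReal t := by
    intro μ hμ
    constructor
    · rw [← hint μ]; exact lintegral_mono fun y => (pw y).1
    · calc ∫⁻ z, h z ∂μ
          ≤ ∫⁻ y, (∑ i ∈ Finset.Icc 1 n, (A i).indicator (fun _ => ENNReal.ofReal t) y)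
              + ENNReal.ofReal t ∂μ := lintegral_mono fun y => (pw y).2
        _ = (∑ i ∈ Finset.Icc 1 n, ENNReal.ofReal t * μ (A i)) + ENNReal.ofReal t := by
            rw [lintegral_add_right _ measurable_const, hint μ, lintegral_const,
              measure_univ, mul_one]
  -- choose δ
  set ρ : ℝ := ε / (2 * (n * t + 1)) with hρdef
  have hnt0 : (0 : ℝ) ≤ n * t := by positivity
  have hρ : 0 < ρ := by positivity
  choose δf hδf0 hδf using fun i : ℕ => hcont (A i) (hA i) x ρ hρ
  have hne : (Finset.Icc 1 n).Nonempty := ⟨1, by simp [hn1]⟩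
  refine ⟨(Finset.Icc 1 n).inf' hne δf, ?_, ?_⟩
  · rw [Finset.lt_inf'_iff]; exact fun i _ => hδf0 i
  intro y hy
  have hclose : ∀ i ∈ Finset.Icc 1 n,
      κ y (A i) ≤ κ x (A i) + ENNReal.ofReal ρ ∧
      κ x (A i) ≤ κ y (A i) + ENNReal.ofReal ρ := by
    intro i hi
    have habs := hδf i y (hy.trans_le (Finset.inf'_le _ hi))
    rw [abs_sub_lt_iff] at habs
    constructor
    · calc κ y (A i) = ENNReal.ofReal (κ y (A i)).toReal := (ENNReal.ofReal_toReal (measure_ne_top _ _)).symm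
        _ ≤ ENNReal.ofReal ((κ x (A i)).toReal + ρ) := ENNReal.ofReal_le_ofReal (by linarith [habs.1])
        _ ≤ ENNReal.ofReal (κ x (A i)).toReal + ENNReal.ofReal ρ := ENNReal.ofReal_add_le
        _ = κ x (A i) + ENNReal.ofReal ρ := by rw [ENNReal.ofReal_toReal (measure_ne_top _ _)]
    · calc κ x (A i) = ENNReal.ofReal (κ x (A i)).toReal := (ENNReal.ofReal_toReal (measure_ne_top _ _)).symm
        _ ≤ ENNReal.ofReal ((κ y (A i)).toReal + ρ) := ENNReal.ofReal_le_ofReal (by linarith [habs.2])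
        _ ≤ ENNReal.ofReal (κ y (A i)).toReal + ENNReal.ofReal ρ := ENNReal.ofReal_add_le
        _ = κ y (A i) + ENNReal.ofReal ρ := by rw [ENNReal.ofReal_toReal (measure_ne_top _ _)]
  have hsum_cmp : ∀ μ ν : Measure S, (∀ i ∈ Finset.Icc 1 n, μ (A i) ≤ ν (A i) + ENNReal.ofReal ρ) →
      (∑ i ∈ Finset.Icc 1 n, ENNReal.ofReal t * μ (A i))
        ≤ (∑ i ∈ Finset.Icc 1 n, ENNReal.ofReal t * ν (A i)) + ENNReal.ofReal (ε / 2) := by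
    intro μ ν hμν
    calc (∑ i ∈ Finset.Icc 1 n, ENNReal.ofReal t * μ (A i))
        ≤ ∑ i ∈ Finset.Icc 1 n, (ENNReal.ofReal t * ν (A i) + ENNReal.ofReal (t * ρ)) := by
          refine Finset.sum_le_sum fun i hi => ?_
          calc ENNReal.ofReal t * μ (A i) ≤ ENNReal.ofReal t * (ν (A i) + ENNReal.ofReal ρ) :=
                mul_le_mul_right (hμν i hi) _
            _ = ENNReal.ofReal t * ν (A i) + ENNReal.ofReal (t * ρ) := by
                rw [mul_add, ENNReal.ofReal_mul ht.le]
      _ = (∑ i ∈ Finset.Icc 1 n, ENNReal.ofReal t * ν (A i)) + (n : ℝ≥0∞) * ENNReal.ofReal (t * ρ) := by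
          rw [Finset.sum_add_distrib, Finset.sum_const, Nat.card_Icc]
          simp [nsmul_eq_mul]
      _ ≤ (∑ i ∈ Finset.Icc 1 n, ENNReal.ofReal t * ν (A i)) + ENNReal.ofReal (ε / 2) := by
          refine add_le_add_right ?_ _
          rw [← ENNReal.ofReal_natCast n, ← ENNReal.ofReal_mul (Nat.cast_nonneg n)]
          refine ENNReal.ofReal_le_ofReal ?_
          have hD : (0:ℝ) < 2 * ((n:ℝ) * t + 1) := by positivity
          have hq : ρ * (2 * ((n:ℝ) * t + 1)) = ε := by
            rw [hρdef]; exact div_mul_cancel₀ _ hD.ne'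
          nlinarith [hρ.le, hnt0]
  haveI := hp x; haveI := hp y
  have e2 : ENNReal.ofReal (ε / 2) + ENNReal.ofReal (ε / 2) = ENNReal.ofReal ε := by
    rw [← ENNReal.ofReal_add (by positivity) (by positivity)]
    norm_num
  constructor
  · calc ∫⁻ z, h z ∂κ y ≤ (∑ i ∈ Finset.Icc 1 n, ENNReal.ofReal t * κ y (A i)) + ENNReal.ofReal t :=
        (hsand _ (hp y)).2
      _ ≤ ((∑ i ∈ Finset.Icc 1 n, ENNReal.ofReal t * κ x (A i)) + ENNReal.ofReal (ε / 2))
          + ENNReal.ofReal t :=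
        add_le_add_left (hsum_cmp _ _ fun i hi => (hclose i hi).1) _
      _ ≤ (∫⁻ z, h z ∂κ x + ENNReal.ofReal (ε / 2)) + ENNReal.ofReal (ε / 2) := by
          refine add_le_add (add_le_add_left (hsand _ (hp x)).1 _) (ENNReal.ofReal_le_ofReal htε)
      _ = ∫⁻ z, h z ∂κ x + ENNReal.ofReal ε := by rw [add_assoc, e2]
  · calc ∫⁻ z, h z ∂κ x ≤ (∑ i ∈ Finset.Icc 1 n, ENNReal.ofReal t * κ x (A i)) + ENNReal.ofReal t :=
        (hsand _ (hp x)).2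
      _ ≤ ((∑ i ∈ Finset.Icc 1 n, ENNReal.ofReal t * κ y (A i)) + ENNReal.ofReal (ε / 2))
          + ENNReal.ofReal t :=
        add_le_add_left (hsum_cmp _ _ fun i hi => (hclose i hi).2) _
      _ ≤ (∫⁻ z, h z ∂κ y + ENNReal.ofReal (ε / 2)) + ENNReal.ofReal (ε / 2) := by
          refine add_le_add (add_le_add_left (hsand _ (hp y)).1 _) (ENNReal.ofReal_le_ofReal htε)
      _ = ∫⁻ z, h z ∂κ y + ENNReal.ofReal ε := by rw [add_assoc, e2]

lemma min_step {A B I J c : ℝ≥0∞} {e : ℝ}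
    (h1 : B ≤ A + ENNReal.ofReal (e / 2)) (h2 : J ≤ I + ENNReal.ofReal (e / 2))
    (he : 0 ≤ e) :
    min (B + J) c ≤ min (A + I) c + ENNReal.ofReal e := by
  have e2 : ENNReal.ofReal (e / 2) + ENNReal.ofReal (e / 2) = ENNReal.ofReal e := by
    rw [← ENNReal.ofReal_add (by positivity) (by positivity)]; norm_num
  have hBJ : B + J ≤ (A + I) + ENNReal.ofReal e := by
    calc B + J ≤ (A + ENNReal.ofReal (e / 2)) + (I + ENNReal.ofReal (e / 2)) := add_le_add h1 h2
      _ = (A + I) + ENNReal.ofReal e := by rw [add_add_add_comm, e2]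
  calc min (B + J) c ≤ min ((A + I) + ENNReal.ofReal e) (c + ENNReal.ofReal e) :=
      min_le_min hBJ (self_le_add_right _ _)
    _ = min (A + I) c + ENNReal.ofReal e := min_add_add_right _ _ _

lemma Jaux_cont_hat {κ : S → Measure S} (hp : ∀ x, IsProbabilityMeasure (κ x)) (c' : ℕ → ℝ) :
    ∀ (m j : ℕ) (ε : ℝ), 0 < ε → ∃ η : ℝ, 0 < η ∧
      ∀ xhat yhat : ℕ → S, (∀ l, j ≤ l → l < j + m → dS (xhat l) (yhat l) < η) →
      ∀ x, Jaux κ c' yhat m j x ≤ Jaux κ c' xhat m j x + ENNReal.ofReal ε := by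
  intro m
  induction m with
  | zero => exact fun j ε hε => ⟨1, one_pos, fun xhat yhat _ x => by simp [Jaux]⟩
  | succ m IH =>
    intro j ε hε
    obtain ⟨η', hη'0, hIH⟩ := IH (j + 1) (ε / 2) (by positivity)
    set R : ℝ := Real.sqrt (max (c' j) 0) + 1 with hRdef
    have hR0 : 0 < R := by positivity
    have hR1 : 1 ≤ R := by
      have := Real.sqrt_nonneg (max (c' j) 0); linarith
    refine ⟨min 1 (min η' (ε / (2 * (2 * R + 1)))), by positivity, ?_⟩
    intro xhat yhat hclose x
    have hη1 : min 1 (min η' (ε / (2 * (2 * R + 1)))) ≤ 1 := min_le_left _ _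
    have hηη' : min 1 (min η' (ε / (2 * (2 * R + 1)))) ≤ η' :=
      (min_le_right _ _).trans (min_le_left _ _)
    have hηε : min 1 (min η' (ε / (2 * (2 * R + 1)))) ≤ ε / (2 * (2 * R + 1)) :=
      (min_le_right _ _).trans (min_le_right _ _)
    have hint : (∫⁻ y, Jaux κ c' yhat m (j + 1) y ∂κ x)
        ≤ (∫⁻ y, Jaux κ c' xhat m (j + 1) y ∂κ x) + ENNReal.ofReal (ε / 2) := by
      haveI := hp x
      calc (∫⁻ y, Jaux κ c' yhat m (j + 1) y ∂κ x)
          ≤ ∫⁻ y, Jaux κ c' xhat m (j + 1) y + ENNReal.ofReal (ε / 2) ∂κ x :=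
            lintegral_mono fun y => hIH xhat yhat
              (fun l h1 h2 => (hclose l (by omega) (by omega)).trans_le hηη') y
        _ = (∫⁻ y, Jaux κ c' xhat m (j + 1) y ∂κ x) + ENNReal.ofReal (ε / 2) := by
            rw [lintegral_add_right _ measurable_const, lintegral_const, measure_univ, mul_one]
    have he := hclose j (le_refl j) (by omega)
    have he0 := dS_nonneg (xhat j) (yhat j)
    have ha0 := dS_nonneg x (xhat j)
    have hb0 := dS_nonneg x (yhat j)
    show min _ _ ≤ min _ _ + _
    rcases le_or_gt (dS x (xhat j)) R with hle | hlt
    · have htri : dS x (yhat j) ≤ dS x (xhat j) + dS (xhat j) (yhat j) := dS_triangle _ _ _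
      have hd2 : dS x (yhat j) ^ 2 ≤ dS x (xhat j) ^ 2 + ε / 2 := by
        have h1 : dS (xhat j) (yhat j) < 1 := he.trans_le hη1
        have h2 : dS (xhat j) (yhat j) ≤ ε / (2 * (2 * R + 1)) := he.le.trans hηε
        have h3 : (ε / (2 * (2 * R + 1))) * (2 * R + 1) = ε / 2 := by
          field_simp
        nlinarith
      have hofd : ENNReal.ofReal (dS x (yhat j) ^ 2)
          ≤ ENNReal.ofReal (dS x (xhat j) ^ 2) + ENNReal.ofReal (ε / 2) := by
        calc ENNReal.ofReal (dS x (yhat j) ^ 2)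
            ≤ ENNReal.ofReal (dS x (xhat j) ^ 2 + ε / 2) := ENNReal.ofReal_le_ofReal hd2
          _ ≤ _ := ENNReal.ofReal_add_le
      exact min_step hofd hint hε.le
    · have htri : dS x (xhat j) ≤ dS x (yhat j) + dS (xhat j) (yhat j) := by
        rw [dS_comm (xhat j) (yhat j)]; exact dS_triangle _ _ _
      have hbig : Real.sqrt (max (c' j) 0) ≤ dS x (yhat j) := by
        have h1 : dS (xhat j) (yhat j) < 1 := he.trans_le hη1
        rw [hRdef] at hlt
        linarith
      have hcb : ∀ b : ℝ, Real.sqrt (max (c' j) 0) ≤ b →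
          ENNReal.ofReal (c' j) ≤ ENNReal.ofReal (b ^ 2) := by
        intro b hb
        refine ENNReal.ofReal_le_ofReal ?_
        have h1 : Real.sqrt (max (c' j) 0) ^ 2 = max (c' j) 0 := Real.sq_sqrt (le_max_right _ _)
        have h2 : Real.sqrt (max (c' j) 0) ^ 2 ≤ b ^ 2 := by
          have := Real.sqrt_nonneg (max (c' j) 0); nlinarith
        have := le_max_left (c' j) 0
        linarith
      have hmin1 : min (ENNReal.ofReal (dS x (yhat j) ^ 2)
          + ∫⁻ y, Jaux κ c' yhat m (j + 1) y ∂κ x) (ENNReal.ofReal (c' j))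
          = ENNReal.ofReal (c' j) :=
        min_eq_right ((hcb _ hbig).trans (self_le_add_right _ _))
      have hbig2 : Real.sqrt (max (c' j) 0) ≤ dS x (xhat j) := by rw [hRdef] at hlt; linarith
      have hmin2 : min (ENNReal.ofReal (dS x (xhat j) ^ 2)
          + ∫⁻ y, Jaux κ c' xhat m (j + 1) y ∂κ x) (ENNReal.ofReal (c' j))
          = ENNReal.ofReal (c' j) :=
        min_eq_right ((hcb _ hbig2).trans (self_le_add_right _ _))
      rw [hmin1, hmin2]
      exact self_le_add_right _ _

lemma Jaux_cont_x {κ : S → Measure S}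
    (hm : ∀ A : Set S, MeasurableSet A → Measurable fun x => κ x A)
    (hp : ∀ x, IsProbabilityMeasure (κ x))
    (hcont : ∀ A : Set S, MeasurableSet A → DContinuous fun x => (κ x A).toReal)
    (c' : ℕ → ℝ) (xhat : ℕ → S) :
    ∀ (m j : ℕ) (x : S) (ε : ℝ), 0 < ε → ∃ δ : ℝ, 0 < δ ∧ ∀ y : S, dS x y < δ →
      Jaux κ c' xhat m j y ≤ Jaux κ c' xhat m j x + ENNReal.ofReal ε ∧
      Jaux κ c' xhat m j x ≤ Jaux κ c' xhat m j y + ENNReal.ofReal ε := by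
  intro m
  induction m with
  | zero => exact fun j x ε hε => ⟨1, one_pos, fun y _ => by simp [Jaux]⟩
  | succ m _ =>
    intro j x ε hε
    obtain ⟨δ₁, hδ₁0, hB⟩ := lint_cont hp hcont
      (Jaux_measurable hm hp c' xhat m (j + 1))
      (by positivity : (0:ℝ) < |c' (j + 1)| + 1)
      (fun y => Jaux_bound κ c' xhat m (j + 1) y) x (by positivity : (0:ℝ) < ε / 2)
    set a : ℝ := dS x (xhat j) with hadef
    have ha0 : 0 ≤ a := dS_nonneg _ _
    refine ⟨min δ₁ (min 1 (ε / (2 * (2 * a + 3)))), by positivity, ?_⟩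
    intro y hy
    have hd1 : dS x y < δ₁ := hy.trans_le (min_le_left _ _)
    have hd2 : dS x y < 1 := hy.trans_le ((min_le_right _ _).trans (min_le_left _ _))
    have hd3 : dS x y ≤ ε / (2 * (2 * a + 3)) :=
      hy.le.trans ((min_le_right _ _).trans (min_le_right _ _))
    have hd0 : 0 ≤ dS x y := dS_nonneg _ _
    set b : ℝ := dS y (xhat j) with hbdef
    have hb0 : 0 ≤ b := dS_nonneg _ _
    have htri1 : b ≤ a + dS x y := by
      rw [hbdef, hadef, dS_comm x (xhat j)]
      calc dS y (xhat j) ≤ dS y x + dS x (xhat j) := dS_triangle _ _ _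
        _ = dS (xhat j) x + dS x y := by rw [dS_comm y x, dS_comm x (xhat j)]; ring
    have htri2 : a ≤ b + dS x y := by
      calc a = dS x (xhat j) := rfl
        _ ≤ dS x y + dS y (xhat j) := dS_triangle _ _ _
        _ = b + dS x y := by ring
    have hkey : (ε / (2 * (2 * a + 3))) * (2 * a + 3) = ε / 2 := by field_simp
    have hsq1 : b ^ 2 ≤ a ^ 2 + ε / 2 := by nlinarith
    have hsq2 : a ^ 2 ≤ b ^ 2 + ε / 2 := by nlinarith
    have hof1 : ENNReal.ofReal (b ^ 2) ≤ ENNReal.ofReal (a ^ 2) + ENNReal.ofReal (ε / 2) :=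
      (ENNReal.ofReal_le_ofReal hsq1).trans ENNReal.ofReal_add_le
    have hof2 : ENNReal.ofReal (a ^ 2) ≤ ENNReal.ofReal (b ^ 2) + ENNReal.ofReal (ε / 2) :=
      (ENNReal.ofReal_le_ofReal hsq2).trans ENNReal.ofReal_add_le
    obtain ⟨hI1, hI2⟩ := hB y hd1
    exact ⟨min_step hof1 hI1 hε.le, min_step hof2 hI2 hε.le⟩

lemma toReal_close {a b : ℝ≥0∞} {e : ℝ} (ha : a ≠ ⊤) (hb : b ≠ ⊤)
    (h1 : a ≤ b + ENNReal.ofReal e) (h2 : b ≤ a + ENNReal.ofReal e) (he : 0 ≤ e) :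
    |a.toReal - b.toReal| ≤ e := by
  rw [abs_sub_le_iff]
  constructor
  · have := ENNReal.toReal_mono (ENNReal.add_ne_top.mpr ⟨hb, ENNReal.ofReal_ne_top⟩) h1
    rw [ENNReal.toReal_add hb ENNReal.ofReal_ne_top, ENNReal.toReal_ofReal he] at this
    linarith
  · have := ENNReal.toReal_mono (ENNReal.add_ne_top.mpr ⟨ha, ENNReal.ofReal_ne_top⟩) h2
    rw [ENNReal.toReal_add ha ENNReal.ofReal_ne_top, ENNReal.toReal_ofReal he] at this
    linarith

lemma Gj_close {κ : S → Measure S}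
    (hm : ∀ A : Set S, MeasurableSet A → Measurable fun x => κ x A)
    (hp : ∀ x, IsProbabilityMeasure (κ x))
    (hcont : ∀ A : Set S, MeasurableSet A → DContinuous fun x => (κ x A).toReal)
    (c' : ℕ → ℝ) (N j : ℕ) (hj : j ≤ N) (x : S) (xhat : ℕ → S) (ε : ℝ) (hε : 0 < ε) :
    ∃ δ : ℝ, 0 < δ ∧ ∀ (y : S) (yhat : ℕ → S), dS x y < δ →
      (∀ l, j ≤ l → l ≤ N → dS (xhat l) (yhat l) < δ) →
      |(Gj κ c' N yhat j y).toReal - (Gj κ c' N xhat j x).toReal| < ε := by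
  set m : ℕ := N + 1 - j with hmdef
  obtain ⟨η, hη0, hA⟩ := Jaux_cont_hat hp c' m j (ε / 4) (by positivity)
  obtain ⟨δ₁, hδ₁0, hB⟩ := lint_cont hp hcont (Jaux_measurable hm hp c' xhat m j)
    (by positivity : (0:ℝ) < |c' j| + 1) (fun z => Jaux_bound κ c' xhat m j z) x
    (by positivity : (0:ℝ) < ε / 4)
  refine ⟨min η δ₁, lt_min hη0 hδ₁0, ?_⟩
  intro y yhat hxy hhat
  haveI := hp x; haveI := hp y
  have hGdef : ∀ (z : S) (zhat : ℕ → S),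
      Gj κ c' N zhat j z = ∫⁻ w, Jaux κ c' zhat m j w ∂κ z := fun _ _ => rfl
  have hfwd : ∀ w, Jaux κ c' yhat m j w ≤ Jaux κ c' xhat m j w + ENNReal.ofReal (ε / 4) :=
    hA xhat yhat (fun l hl1 hl2 => (hhat l hl1 (by omega)).trans_le (min_le_left _ _))
  have hbwd : ∀ w, Jaux κ c' xhat m j w ≤ Jaux κ c' yhat m j w + ENNReal.ofReal (ε / 4) :=
    hA yhat xhat (fun l hl1 hl2 => by
      rw [dS_comm]; exact (hhat l hl1 (by omega)).trans_le (min_le_left _ _))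
  have hxy1 : dS x y < δ₁ := hxy.trans_le (min_le_right _ _)
  obtain ⟨hB1, hB2⟩ := hB y hxy1
  have lint_add : ∀ (z : S) (g : S → ℝ≥0∞) (c : ℝ),
      (∫⁻ w, g w + ENNReal.ofReal c ∂κ z) = (∫⁻ w, g w ∂κ z) + ENNReal.ofReal c := by
    intro z g c
    haveI := hp z
    rw [lintegral_add_right _ measurable_const, lintegral_const, measure_univ, mul_one]
  have e24 : ENNReal.ofReal (ε / 4) + ENNReal.ofReal (ε / 4) = ENNReal.ofReal (ε / 2) := by
    rw [← ENNReal.ofReal_add (by positivity) (by positivity)]; congr 1; ring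
  have hG1 : Gj κ c' N yhat j y ≤ Gj κ c' N xhat j x + ENNReal.ofReal (ε / 2) := by
    rw [hGdef, hGdef]
    calc (∫⁻ w, Jaux κ c' yhat m j w ∂κ y)
        ≤ ∫⁻ w, Jaux κ c' xhat m j w + ENNReal.ofReal (ε / 4) ∂κ y :=
          lintegral_mono fun w => hfwd w
      _ = (∫⁻ w, Jaux κ c' xhat m j w ∂κ y) + ENNReal.ofReal (ε / 4) := lint_add _ _ _
      _ ≤ ((∫⁻ w, Jaux κ c' xhat m j w ∂κ x) + ENNReal.ofReal (ε / 4)) + ENNReal.ofReal (ε / 4) :=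
          add_le_add_left hB1 _
      _ = (∫⁻ w, Jaux κ c' xhat m j w ∂κ x) + ENNReal.ofReal (ε / 2) := by
          rw [add_assoc, e24]
  have hG2 : Gj κ c' N xhat j x ≤ Gj κ c' N yhat j y + ENNReal.ofReal (ε / 2) := by
    rw [hGdef, hGdef]
    calc (∫⁻ w, Jaux κ c' xhat m j w ∂κ x)
        ≤ (∫⁻ w, Jaux κ c' xhat m j w ∂κ y) + ENNReal.ofReal (ε / 4) := hB2
      _ ≤ (∫⁻ w, Jaux κ c' yhat m j w + ENNReal.ofReal (ε / 4) ∂κ y) + ENNReal.ofReal (ε / 4) :=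
          add_le_add_left (lintegral_mono fun w => hbwd w) _
      _ = ((∫⁻ w, Jaux κ c' yhat m j w ∂κ y) + ENNReal.ofReal (ε / 4)) + ENNReal.ofReal (ε / 4) := by
          rw [lint_add]
      _ = (∫⁻ w, Jaux κ c' yhat m j w ∂κ y) + ENNReal.ofReal (ε / 2) := by
          rw [add_assoc, e24]
  have hfin : ∀ (z : S) (zhat : ℕ → S), Gj κ c' N zhat j z ≠ ⊤ := by
    intro z zhat
    haveI := hp z
    have : Gj κ c' N zhat j z ≤ ENNReal.ofReal (|c' j| + 1) := by
      rw [hGdef]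
      calc (∫⁻ w, Jaux κ c' zhat m j w ∂κ z) ≤ ∫⁻ _, ENNReal.ofReal (|c' j| + 1) ∂κ z :=
          lintegral_mono fun w => Jaux_bound κ c' zhat m j w
        _ = ENNReal.ofReal (|c' j| + 1) := by rw [lintegral_const, measure_univ, mul_one]
    exact (this.trans_lt ENNReal.ofReal_lt_top).ne
  have := toReal_close (hfin y yhat) (hfin x xhat) hG1 hG2 (by positivity)
  linarith


/-- Under Assumption 1(i), each `G_j` is continuous on `S × S^(N−j+1)` with the
product metric; in particular `G` is continuous on `S^(N−k+1)`. -/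
theorem Gj_continuous (κ : S → Measure S) (hκ : IsMarkov κ)
    (hcont : ∀ A : Set S, MeasurableSet A → DContinuous fun x => (κ x A).toReal)
    (k N : ℕ) (hkN : k ≤ N) (c' : ℕ → ℝ) (hc' : ∀ j, k ≤ j → j ≤ N → 0 < c' j) :
    (∀ j, k ≤ j → j ≤ N →
      ∀ (x : S) (xhat : ℕ → S), ∀ ε : ℝ, 0 < ε → ∃ δ : ℝ, 0 < δ ∧
        ∀ (y : S) (yhat : ℕ → S),
          Real.sqrt (dS x y ^ 2 + ∑ l ∈ Finset.Icc j N, dS (xhat l) (yhat l) ^ 2) < δ →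
          |(Gj κ c' N yhat j y).toReal - (Gj κ c' N xhat j x).toReal| < ε) ∧
    (∀ xhat : ℕ → S, ∀ ε : ℝ, 0 < ε → ∃ δ : ℝ, 0 < δ ∧
        ∀ yhat : ℕ → S,
          Real.sqrt (∑ l ∈ Finset.Icc k N, dS (xhat l) (yhat l) ^ 2) < δ →
          |(Gtot κ c' k N yhat).toReal - (Gtot κ c' k N xhat).toReal| < ε) := by
  obtain ⟨hp, hm⟩ := hκ
  have main : ∀ j, k ≤ j → j ≤ N →
      ∀ (x : S) (xhat : ℕ → S), ∀ ε : ℝ, 0 < ε → ∃ δ : ℝ, 0 < δ ∧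
        ∀ (y : S) (yhat : ℕ → S),
          Real.sqrt (dS x y ^ 2 + ∑ l ∈ Finset.Icc j N, dS (xhat l) (yhat l) ^ 2) < δ →
          |(Gj κ c' N yhat j y).toReal - (Gj κ c' N xhat j x).toReal| < ε := by
    intro j _ hjN x xhat ε hε
    obtain ⟨δ, hδ0, hδ⟩ := Gj_close hm hp hcont c' N j hjN x xhat ε hε
    refine ⟨δ, hδ0, ?_⟩
    intro y yhat hlt
    have hsum0 : (0:ℝ) ≤ ∑ l ∈ Finset.Icc j N, dS (xhat l) (yhat l) ^ 2 :=
      Finset.sum_nonneg fun l _ => sq_nonneg _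
    have hT : dS x y ^ 2 + ∑ l ∈ Finset.Icc j N, dS (xhat l) (yhat l) ^ 2 < δ ^ 2 :=
      Real.lt_sq_of_sqrt_lt hlt
    have hxy : dS x y < δ := by nlinarith [dS_nonneg x y]
    refine hδ y yhat hxy ?_
    intro l hl1 hl2
    have hmem : l ∈ Finset.Icc j N := Finset.mem_Icc.mpr ⟨hl1, hl2⟩
    have hsingle : dS (xhat l) (yhat l) ^ 2
        ≤ ∑ i ∈ Finset.Icc j N, dS (xhat i) (yhat i) ^ 2 :=
      Finset.single_le_sum (f := fun i => dS (xhat i) (yhat i) ^ 2) (fun i _ => sq_nonneg _) hmem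
    nlinarith [dS_nonneg (xhat l) (yhat l), sq_nonneg (dS x y)]
  refine ⟨main, ?_⟩
  intro xhat ε hε
  obtain ⟨δ, hδ0, hδ⟩ := main k le_rfl hkN origin xhat ε hε
  refine ⟨δ, hδ0, ?_⟩
  intro yhat hlt
  have h0 : dS origin origin = 0 := dS_self _
  have : Real.sqrt (dS origin origin ^ 2
      + ∑ l ∈ Finset.Icc k N, dS (xhat l) (yhat l) ^ 2) < δ := by
    rw [h0]; simpa using hlt
  exact hδ origin yhat this



end
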